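/- Let H be a real inner product space, let g, Δt > 0 be real numbers, and take α = 2/Δt. Let V^h be a linear subspace of H × H. Suppose Φ = (φ,η) and Φʰ = (φʰ,ηʰ) are pairs in H × H with Φʰ ∈ V^h satisfying Galerkin orthogonality B_fs(Wʰ, Φ − Φʰ) = 0 for every Wʰ ∈ V^h, where B_fs((w,v),(φ,η)) = (2/Δt)·⟨w,φ⟩ + g·⟨w,η⟩ + (g²·Δt/2)·⟨v,η⟩. Then |||Φ − Φʰ|||_s ≤ (1 + √5)·|||Φ − Wʰ|||_s for every Wʰ ∈ V^h, where |||(w,v)|||²_s = (1/Δt)·‖w‖² + (g²·Δt/4)·‖v‖² (quasi-optimality of the segregated free-surface formulation). -/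

import Mathlib

open scoped RealInnerProductSpace

private lemma seg_core_sq (s a b c d : ℝ) (hs : s ^ 2 = 5) (hs2 : 2 ≤ s)
    (ha : 0 ≤ a) (hb : 0 ≤ b) (hc : 0 ≤ c) (hd : 0 ≤ d) :
    (2*c*a + 2*c*b + 2*d*b) ^ 2 ≤ (1 + s) ^ 2 * ((c^2 + d^2) * (a^2 + b^2)) := by
  have cauchy : (2*c*a + (2*c+2*d)*b)^2 ≤ (4*c^2 + (2*c+2*d)^2) * (a^2 + b^2) := by
    nlinarith [sq_nonneg (2*c*b - (2*c+2*d)*a)]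
  have step2 : 4*c^2 + (2*c+2*d)^2 ≤ (6 + 2*s) * (c^2 + d^2) := by
    nlinarith [sq_nonneg ((2*s-2)*c - 4*d), mul_nonneg hc hd, sq_nonneg c, sq_nonneg d]
  have hab : (0:ℝ) ≤ a^2 + b^2 := by positivity
  calc (2*c*a + 2*c*b + 2*d*b)^2 = (2*c*a + (2*c+2*d)*b)^2 := by ring
    _ ≤ (4*c^2 + (2*c+2*d)^2) * (a^2 + b^2) := cauchy
    _ ≤ ((6 + 2*s) * (c^2 + d^2)) * (a^2 + b^2) := mul_le_mul_of_nonneg_right step2 hab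
    _ = (1 + s)^2 * ((c^2 + d^2) * (a^2 + b^2)) := by linear_combination (-((c^2+d^2)*(a^2+b^2))) * hs

private lemma seg_core (a b c d : ℝ) (ha : 0 ≤ a) (hb : 0 ≤ b) (hc : 0 ≤ c) (hd : 0 ≤ d) :
    2*c*a + 2*c*b + 2*d*b ≤
      (1 + Real.sqrt 5) * (Real.sqrt (c^2 + d^2) * Real.sqrt (a^2 + b^2)) := by
  have hs : Real.sqrt 5 ^ 2 = 5 := Real.sq_sqrt (by norm_num)
  have hs2 : 2 ≤ Real.sqrt 5 := by nlinarith [Real.sqrt_nonneg 5, hs]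
  set s := Real.sqrt 5 with hsdef
  have hP : (0:ℝ) ≤ c^2 + d^2 := by positivity
  have hQ : (0:ℝ) ≤ a^2 + b^2 := by positivity
  have hL : 0 ≤ 2*c*a + 2*c*b + 2*d*b := by positivity
  have hR : 0 ≤ (1 + s) * (Real.sqrt (c^2 + d^2) * Real.sqrt (a^2 + b^2)) := by positivity
  have hR2 : ((1 + s) * (Real.sqrt (c^2 + d^2) * Real.sqrt (a^2 + b^2)))^2
      = (1 + s)^2 * ((c^2 + d^2) * (a^2 + b^2)) := by
    rw [mul_pow, mul_pow, Real.sq_sqrt hP, Real.sq_sqrt hQ]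
  have hsq := seg_core_sq s a b c d hs hs2 ha hb hc hd
  have h1 : (2*c*a + 2*c*b + 2*d*b)^2
      ≤ ((1 + s) * (Real.sqrt (c^2 + d^2) * Real.sqrt (a^2 + b^2)))^2 := by
    rw [hR2]; exact hsq
  have := Real.sqrt_le_sqrt h1
  rwa [Real.sqrt_sq hL, Real.sqrt_sq hR] at this

/-- Quasi-optimality (Cea's estimate) for the segregated free-surface formulation with
`α = 2/Δt`: Galerkin orthogonality implies
`|||Φ − Φʰ|||_s ≤ (1 + √5)·|||Φ − Wʰ|||_s` for all `Wʰ ∈ Vʰ`. -/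
theorem segregated_quasi_optimality
    {H : Type*} [NormedAddCommGroup H] [InnerProductSpace ℝ H]
    (g Δt : ℝ) (hg : 0 < g) (hΔt : 0 < Δt)
    (Vh : Submodule ℝ (H × H))
    (Φ Φh : H × H) (hΦh : Φh ∈ Vh)
    (hGal : ∀ Wh ∈ Vh,
      (2 / Δt) * ⟪Wh.1, (Φ - Φh).1⟫ + g * ⟪Wh.1, (Φ - Φh).2⟫
        + (g ^ 2 * Δt / 2) * ⟪Wh.2, (Φ - Φh).2⟫ = 0) :
    ∀ Wh ∈ Vh,
      Real.sqrt ((1 / Δt) * ‖(Φ - Φh).1‖ ^ 2 + (g ^ 2 * Δt / 4) * ‖(Φ - Φh).2‖ ^ 2) ≤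
        (1 + Real.sqrt 5) *
          Real.sqrt ((1 / Δt) * ‖(Φ - Wh).1‖ ^ 2 + (g ^ 2 * Δt / 4) * ‖(Φ - Wh).2‖ ^ 2) := by
  obtain ⟨r, hr, rfl⟩ : ∃ r : ℝ, 0 < r ∧ r ^ 2 = Δt :=
    ⟨Real.sqrt Δt, Real.sqrt_pos.2 hΔt, Real.sq_sqrt hΔt.le⟩
  intro Wh hWh
  have hrne : r ≠ 0 := hr.ne'
  set E1 := (Φ - Φh).1 with hE1def
  set E2 := (Φ - Φh).2 with hE2def
  set D1 := (Φ - Wh).1 with hD1def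
  set D2 := (Φ - Wh).2 with hD2def
  -- Galerkin orthogonality gives B(E,E) = B(D,E)
  have key : (2 / r^2) * ⟪E1, E1⟫ + g * ⟪E1, E2⟫ + (g^2 * r^2 / 2) * ⟪E2, E2⟫
      = (2 / r^2) * ⟪D1, E1⟫ + g * ⟪D1, E2⟫ + (g^2 * r^2 / 2) * ⟪D2, E2⟫ := by
    have hG := hGal (Φh - Wh) (Vh.sub_mem hΦh hWh)
    simp only [hE1def, hE2def, hD1def, hD2def, Prod.fst_sub, Prod.snd_sub,
      inner_sub_left] at hG ⊢
    linear_combination -hG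
  have hn1 : (0:ℝ) ≤ ‖E1‖ := norm_nonneg _
  have hn2 : (0:ℝ) ≤ ‖E2‖ := norm_nonneg _
  have hm1 : (0:ℝ) ≤ ‖D1‖ := norm_nonneg _
  have hm2 : (0:ℝ) ≤ ‖D2‖ := norm_nonneg _
  -- coercivity : |||E|||² ≤ B(E,E)
  have hip : -(‖E1‖ * ‖E2‖) ≤ ⟪E1, E2⟫ := (abs_le.1 (abs_real_inner_le_norm E1 E2)).1
  have pos : 0 ≤ (1 / r^2) * ‖E1‖^2 - g * (‖E1‖ * ‖E2‖) + (g^2 * r^2 / 4) * ‖E2‖^2 := by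
    have h : (1 / r^2) * ‖E1‖^2 - g * (‖E1‖ * ‖E2‖) + (g^2 * r^2 / 4) * ‖E2‖^2
        = (1 / r^2) * (‖E1‖ - g * r^2 * ‖E2‖ / 2)^2 := by
      field_simp
      ring
    rw [h]; positivity
  have coer : (1 / r^2) * ‖E1‖^2 + (g^2 * r^2 / 4) * ‖E2‖^2
      ≤ (2 / r^2) * ⟪E1, E1⟫ + g * ⟪E1, E2⟫ + (g^2 * r^2 / 2) * ⟪E2, E2⟫ := by
    rw [real_inner_self_eq_norm_sq, real_inner_self_eq_norm_sq]
    have hmul : g * (-(‖E1‖ * ‖E2‖)) ≤ g * ⟪E1, E2⟫ :=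
      mul_le_mul_of_nonneg_left hip hg.le
    have e1 : (2 / r^2) * ‖E1‖^2 = (1 / r^2) * ‖E1‖^2 + (1 / r^2) * ‖E1‖^2 := by ring
    have e2 : (g^2 * r^2 / 2) * ‖E2‖^2
        = (g^2 * r^2 / 4) * ‖E2‖^2 + (g^2 * r^2 / 4) * ‖E2‖^2 := by ring
    linarith [pos, hmul, e1, e2]
  -- boundedness : B(D,E) ≤ Σ coefficient·norm products
  have bound1 : (2 / r^2) * ⟪D1, E1⟫ + g * ⟪D1, E2⟫ + (g^2 * r^2 / 2) * ⟪D2, E2⟫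
      ≤ (2 / r^2) * (‖D1‖ * ‖E1‖) + g * (‖D1‖ * ‖E2‖) + (g^2 * r^2 / 2) * (‖D2‖ * ‖E2‖) := by
    have b1 : ⟪D1, E1⟫ ≤ ‖D1‖ * ‖E1‖ := real_inner_le_norm _ _
    have b2 : ⟪D1, E2⟫ ≤ ‖D1‖ * ‖E2‖ := real_inner_le_norm _ _
    have b3 : ⟪D2, E2⟫ ≤ ‖D2‖ * ‖E2‖ := real_inner_le_norm _ _
    have c1 : (0:ℝ) ≤ 2 / r^2 := by positivity
    have c2 : (0:ℝ) ≤ g^2 * r^2 / 2 := by positivity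
    exact add_le_add (add_le_add (mul_le_mul_of_nonneg_left b1 c1)
      (mul_le_mul_of_nonneg_left b2 hg.le)) (mul_le_mul_of_nonneg_left b3 c2)
  -- scalar estimate with constant 1+√5
  set a := ‖E1‖ / r with hadef
  set b := g * r * ‖E2‖ / 2 with hbdef
  set c := ‖D1‖ / r with hcdef
  set d := g * r * ‖D2‖ / 2 with hddef
  have hXeq : (1 / r^2) * ‖E1‖^2 + (g^2 * r^2 / 4) * ‖E2‖^2 = a^2 + b^2 := by
    rw [hadef, hbdef]; field_simp; ring
  have hYeq : (1 / r^2) * ‖D1‖^2 + (g^2 * r^2 / 4) * ‖D2‖^2 = c^2 + d^2 := by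
    rw [hcdef, hddef]; field_simp; ring
  have eq2 : (2 / r^2) * (‖D1‖ * ‖E1‖) + g * (‖D1‖ * ‖E2‖) + (g^2 * r^2 / 2) * (‖D2‖ * ‖E2‖)
      = 2*c*a + 2*c*b + 2*d*b := by
    rw [hadef, hbdef, hcdef, hddef]; field_simp
  have hcore := seg_core a b c d (by positivity) (by positivity) (by positivity) (by positivity)
  -- assemble : X ≤ (1+√5)·√Y·√X
  have chain : (1 / r^2) * ‖E1‖^2 + (g^2 * r^2 / 4) * ‖E2‖^2
      ≤ (1 + Real.sqrt 5) *
        (Real.sqrt ((1 / r^2) * ‖D1‖^2 + (g^2 * r^2 / 4) * ‖D2‖^2) *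
          Real.sqrt ((1 / r^2) * ‖E1‖^2 + (g^2 * r^2 / 4) * ‖E2‖^2)) := by
    rw [hXeq, hYeq]
    calc a^2 + b^2 ≤ (2 / r^2) * ⟪E1, E1⟫ + g * ⟪E1, E2⟫ + (g^2 * r^2 / 2) * ⟪E2, E2⟫ := by
          rw [← hXeq]; exact coer
      _ = (2 / r^2) * ⟪D1, E1⟫ + g * ⟪D1, E2⟫ + (g^2 * r^2 / 2) * ⟪D2, E2⟫ := key
      _ ≤ (2 / r^2) * (‖D1‖ * ‖E1‖) + g * (‖D1‖ * ‖E2‖) + (g^2 * r^2 / 2) * (‖D2‖ * ‖E2‖) :=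
          bound1
      _ = 2*c*a + 2*c*b + 2*d*b := eq2
      _ ≤ (1 + Real.sqrt 5) * (Real.sqrt (c^2 + d^2) * Real.sqrt (a^2 + b^2)) := hcore
  -- conclude by dividing by √X
  set X := (1 / r^2) * ‖E1‖^2 + (g^2 * r^2 / 4) * ‖E2‖^2 with hXdef
  set Y := (1 / r^2) * ‖D1‖^2 + (g^2 * r^2 / 4) * ‖D2‖^2 with hYdef
  have hX0 : 0 ≤ X := by rw [hXdef]; positivity
  have hsX : Real.sqrt X * Real.sqrt X = X := Real.mul_self_sqrt hX0
  rcases eq_or_lt_of_le (Real.sqrt_nonneg X) with h0 | h0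
  · rw [← h0]; positivity
  · have hmul : Real.sqrt X * Real.sqrt X ≤ ((1 + Real.sqrt 5) * Real.sqrt Y) * Real.sqrt X := by
      rw [hsX, mul_assoc]; exact chain
    exact le_of_mul_le_mul_right hmul h0
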